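/- arXiv:1702.05318 — 4 statements merged into one kernel-verified Lean document; each statement's English description precedes it below -/
import Mathlib

section
/- In the setting of an Abelian extension 𝔭 = 𝔤 ⊕ 𝔞_P determined by (ω, η), let ξ : 𝔞_G → 𝔤 be injective linear, a : 𝔞_G → 𝔞_P a linear isomorphism, and ξ̊(Z) = (ξZ, aZ). Define γ : 𝔤 → 𝔤𝔩(𝔞_G) by γ(X) = a⁻¹(ω(ξ(·), X)) + a⁻¹ η(X) a. Then ξ̊(𝔞_G) is an ideal in 𝔭 if and only if [ξZ, X]_𝔤 = −ξ(γ(X)Z) for all X ∈ 𝔤, Z ∈ 𝔞_G, and η(ξZ)Y = 0 for all Y ∈ 𝔞_P, Z ∈ 𝔞_G. -/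
open Module

/-- in the Abelian extension `𝔭 = 𝔤 ⊕ 𝔞_P` determined by `(ω, η)`, with
`ξ : 𝔞_G → 𝔤` injective linear, `a : 𝔞_G ≃ 𝔞_P` and `ξ̊(Z) = (ξZ, aZ)`, define
`γ(X)Z = a⁻¹(ω(ξZ, X)) + a⁻¹(η(X)(aZ))`.  Then `ξ̊(𝔞_G)` is an ideal in `𝔭` iff
`[ξZ, X]_𝔤 = -ξ(γ(X)Z)` for all `X ∈ 𝔤, Z ∈ 𝔞_G`, and `η(ξZ)Y = 0` for all
`Y ∈ 𝔞_P, Z ∈ 𝔞_G`. -/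
theorem stmt3 {g A AG : Type*} [LieRing g] [LieAlgebra ℝ g] [FiniteDimensional ℝ g]
    [AddCommGroup A] [Module ℝ A] [FiniteDimensional ℝ A]
    [AddCommGroup AG] [Module ℝ AG] [FiniteDimensional ℝ AG]
    (hdim : finrank ℝ AG = finrank ℝ A)
    (η : g →ₗ[ℝ] Module.End ℝ A)
    (hrep : ∀ x y : g, η ⁅x, y⁆ = η x * η y - η y * η x)
    (ω : g →ₗ[ℝ] g →ₗ[ℝ] A) (hskew : ∀ x y, ω x y = -ω y x)
    (hcocycle : ∀ x y z : g,
      η x (ω y z) - η y (ω x z) + η z (ω x y)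
        - ω ⁅x, y⁆ z + ω ⁅x, z⁆ y - ω ⁅y, z⁆ x = 0)
    (B : g × A → g × A → g × A)
    (hB : ∀ p q : g × A, B p q = (⁅p.1, q.1⁆, -ω p.1 q.1 + η p.1 q.2 - η q.1 p.2))
    (ξ : AG →ₗ[ℝ] g) (hξ : Function.Injective ξ) (a : AG ≃ₗ[ℝ] A)
    (γ : g → AG → AG)
    (hγ : ∀ (X : g) (Z : AG), γ X Z = a.symm (ω (ξ Z) X) + a.symm (η X (a Z))) :
    (∀ (p : g × A) (Z : AG),
        B p (ξ Z, a Z) ∈ Submodule.span ℝ (Set.range fun W : AG => ((ξ W, a W) : g × A))) ↔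
      ((∀ (X : g) (Z : AG), ⁅ξ Z, X⁆ = -ξ (γ X Z)) ∧
        (∀ (Y : A) (Z : AG), η (ξ Z) Y = 0)) := by
  have hspan : Submodule.span ℝ (Set.range fun W : AG => ((ξ W, a W) : g × A))
      = LinearMap.range (ξ.prod (a : AG →ₗ[ℝ] A)) := by
    rw [show (Set.range fun W : AG => ((ξ W, a W) : g × A))
        = Set.range (ξ.prod (a : AG →ₗ[ℝ] A)) from rfl,
      ← LinearMap.coe_range, Submodule.span_eq]
  constructor
  · intro h
    constructor
    · intro X Z
      have h1 := h (X, 0) Z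
      rw [hspan] at h1
      obtain ⟨W, hW⟩ := h1
      rw [hB] at hW
      simp only [LinearMap.prod_apply, Pi.prod, LinearMap.coe_coe] at hW
      have hW1 : ξ W = ⁅X, ξ Z⁆ := congrArg Prod.fst hW
      have hW2 : a W = -ω X (ξ Z) + η X (a Z) := by
        have := congrArg Prod.snd hW
        simpa using this
      have hWγ : W = γ X Z := by
        apply a.injective
        rw [hW2, hγ, map_add, a.apply_symm_apply, a.apply_symm_apply, hskew (ξ Z) X]
      rw [← lie_skew, hW1.symm, hWγ]
    · intro Y Z
      have h1 := h (0, Y) Z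
      rw [hspan] at h1
      obtain ⟨W, hW⟩ := h1
      rw [hB] at hW
      simp only [LinearMap.prod_apply, Pi.prod, LinearMap.coe_coe] at hW
      have hW1 : ξ W = 0 := by
        have := congrArg Prod.fst hW
        simpa using this
      have hW0 : W = 0 := hξ (by simpa using hW1)
      have hW2 := congrArg Prod.snd hW
      simp only [hW0, map_zero] at hW2
      have : (0 : A) = -η (ξ Z) Y := by simpa using hW2
      exact neg_eq_zero.mp this.symm
  · rintro ⟨h1, h2⟩ p Z
    rw [hspan, hB]
    refine ⟨γ p.1 Z, ?_⟩
    have hfst : ξ (γ p.1 Z) = ⁅p.1, ξ Z⁆ := by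
      rw [← lie_skew, h1 p.1 Z, neg_neg]
    have hsnd : a (γ p.1 Z) = -ω p.1 (ξ Z) + η p.1 (a Z) - η (ξ Z) p.2 := by
      rw [hγ, map_add, a.apply_symm_apply, a.apply_symm_apply, hskew (ξ Z) p.1,
        h2 p.2 Z, sub_zero]
    exact Prod.ext hfst hsnd
end

section
/- In the setting of the Lie algebra shear, suppose ξ̊(𝔞_G) is an Abelian ideal of 𝔭, so that [ξ(·), X]_𝔤 = −ξ ∘ γ(X) holds for all X ∈ 𝔤 where γ(X) = a⁻¹(ω(ξ(·),X)) + a⁻¹η(X)a and ξ is injective. Then γ : 𝔤 → 𝔤𝔩(𝔞_G) is a Lie algebra homomorphism, i.e. γ([X,Y]) = [γ(X), γ(Y)] for all X, Y ∈ 𝔤. -/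
open Module

/-- in the Lie algebra shear setting, if `ξ̊(𝔞_G)` is an Abelian ideal of
`𝔭 = 𝔤 ⊕ 𝔞_P`, so that `[ξZ, X]_𝔤 = -ξ(γ(X)Z)` holds, where
`γ(X)Z = a⁻¹(ω(ξZ,X)) + a⁻¹(η(X)(aZ))` and `ξ` is injective, then
`γ : 𝔤 → 𝔤𝔩(𝔞_G)` is a Lie algebra homomorphism: `γ([X,Y]) = [γ(X), γ(Y)]`. -/
theorem stmt4 {g A AG : Type*} [LieRing g] [LieAlgebra ℝ g] [FiniteDimensional ℝ g]
    [AddCommGroup A] [Module ℝ A] [FiniteDimensional ℝ A]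
    [AddCommGroup AG] [Module ℝ AG] [FiniteDimensional ℝ AG]
    (hdim : finrank ℝ AG = finrank ℝ A)
    (η : g →ₗ[ℝ] Module.End ℝ A)
    (hrep : ∀ x y : g, η ⁅x, y⁆ = η x * η y - η y * η x)
    (ω : g →ₗ[ℝ] g →ₗ[ℝ] A) (hskew : ∀ x y, ω x y = -ω y x)
    (hcocycle : ∀ x y z : g,
      η x (ω y z) - η y (ω x z) + η z (ω x y)
        - ω ⁅x, y⁆ z + ω ⁅x, z⁆ y - ω ⁅y, z⁆ x = 0)
    (B : g × A → g × A → g × A)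
    (hB : ∀ p q : g × A, B p q = (⁅p.1, q.1⁆, -ω p.1 q.1 + η p.1 q.2 - η q.1 p.2))
    (ξ : AG →ₗ[ℝ] g) (hξ : Function.Injective ξ) (a : AG ≃ₗ[ℝ] A)
    (γ : g → AG → AG)
    (hγ : ∀ (X : g) (Z : AG), γ X Z = a.symm (ω (ξ Z) X) + a.symm (η X (a Z)))
    -- `ξ̊(𝔞_G)` is an Abelian ideal of `𝔭`:
    (habelian : ∀ Z W : AG, B (ξ Z, a Z) (ξ W, a W) = 0)
    (hideal : ∀ (p : g × A) (Z : AG),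
      B p (ξ Z, a Z) ∈ Submodule.span ℝ (Set.range fun W : AG => ((ξ W, a W) : g × A)))
    -- so that in particular `[ξ(·), X]_𝔤 = -ξ ∘ γ(X)`:
    (hbr : ∀ (X : g) (Z : AG), ⁅ξ Z, X⁆ = -ξ (γ X Z)) :
    ∀ (X Y : g) (Z : AG), γ ⁅X, Y⁆ Z = γ X (γ Y Z) - γ Y (γ X Z) := by
  have key : ∀ (W : g) (Z : AG), ξ (γ W Z) = ⁅W, ξ Z⁆ := by
    intro W Z
    have h := hbr W Z
    have : ξ (γ W Z) = -⁅ξ Z, W⁆ := by rw [h]; simp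
    rw [this, ← lie_skew, neg_neg]
  intro X Y Z
  apply hξ
  rw [map_sub, key, key, key, key, key, lie_lie]
end

section
/- Every finite-dimensional real solvable Lie algebra of dimension n can be connected to the Abelian Lie algebra ℝⁿ by a finite sequence of Lie algebra shears, where a single shear step replaces a solvable Lie algebra 𝔰 of derived length r ≥ 2 by the direct sum (𝔰/𝔰⁽ʳ⁻¹⁾) ⊕ 𝔰⁽ʳ⁻¹⁾. More precisely, iterating this step r − 1 times starting from a solvable Lie algebra of derived length r yields an Abelian Lie algebra of the same dimension. -/
open Module LieAlgebra

section ProdLie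

variable {R : Type*} [CommRing R] {L₁ L₂ : Type*} [LieRing L₁] [LieRing L₂]

/-- The product of two Lie rings, with componentwise bracket. -/
instance Prod.instLieRing : LieRing (L₁ × L₂) where
  bracket p q := (⁅p.1, q.1⁆, ⁅p.2, q.2⁆)
  add_lie x y z := by ext : 1 <;> exact add_lie _ _ _
  lie_add x y z := by ext : 1 <;> exact lie_add _ _ _
  lie_self x := by ext : 1 <;> exact lie_self _
  leibniz_lie x y z := by ext : 1 <;> exact leibniz_lie _ _ _

/-- The product of two Lie algebras. -/
instance Prod.instLieAlgebra [LieAlgebra R L₁] [LieAlgebra R L₂] :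
    LieAlgebra R (L₁ × L₂) where
  lie_smul t x y := by ext : 1 <;> exact lie_smul _ _ _

end ProdLie

namespace Stmt6Aux
variable {R : Type*} [CommRing R] {L₁ L₂ : Type*} [LieRing L₁] [LieRing L₂]
  [LieAlgebra R L₁] [LieAlgebra R L₂]
def lieFst : L₁ × L₂ →ₗ⁅R⁆ L₁ := { LinearMap.fst R L₁ L₂ with map_lie' := rfl }
def lieSnd : L₁ × L₂ →ₗ⁅R⁆ L₂ := { LinearMap.snd R L₁ L₂ with map_lie' := rfl }
lemma lieFst_surjective : Function.Surjective (lieFst (R := R) (L₁ := L₁) (L₂ := L₂)) :=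
  fun x => ⟨(x, 0), rfl⟩
lemma derivedSeries_prod_eq_bot (k : ℕ)
    (h1 : derivedSeries R L₁ k = ⊥) (h2 : derivedSeries R L₂ k = ⊥) :
    derivedSeries R (L₁ × L₂) k = ⊥ := by
  have hf : (derivedSeries R (L₁ × L₂) k).map (lieFst (R := R)) = ⊥ :=
    le_bot_iff.mp (h1 ▸ LieIdeal.derivedSeries_map_le k)
  have hs : (derivedSeries R (L₁ × L₂) k).map (lieSnd (R := R)) = ⊥ :=
    le_bot_iff.mp (h2 ▸ LieIdeal.derivedSeries_map_le k)
  rw [LieIdeal.map_eq_bot_iff] at hf hs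
  rw [eq_bot_iff]
  intro x hx
  have h1' : x.1 = 0 := LieHom.mem_ker.mp (hf hx)
  have h2' : x.2 = 0 := LieHom.mem_ker.mp (hs hx)
  simp [LieSubmodule.mem_bot, Prod.ext_iff, h1', h2']
lemma derivedSeries_prod_ne_bot (k : ℕ) (h : derivedSeries R L₁ k ≠ ⊥) :
    derivedSeries R (L₁ × L₂) k ≠ ⊥ := by
  intro hP
  apply h
  rw [← LieIdeal.derivedSeries_map_eq k (lieFst_surjective (R := R) (L₁ := L₁) (L₂ := L₂)), hP,
    LieIdeal.map_eq_bot_iff]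
  exact bot_le
variable {L : Type*} [LieRing L] [LieAlgebra R L]
def quotLieHom (I : LieIdeal R L) : L →ₗ⁅R⁆ L ⧸ I :=
  { (LieSubmodule.Quotient.mk' I).toLinearMap with map_lie' := rfl }
lemma quotLieHom_surjective (I : LieIdeal R L) : Function.Surjective (quotLieHom I) :=
  LieSubmodule.Quotient.surjective_mk' I
lemma derivedSeries_quot (I : LieIdeal R L) (k : ℕ) :
    derivedSeries R (L ⧸ I) k = (derivedSeries R L k).map (quotLieHom I) :=
  (LieIdeal.derivedSeries_map_eq k (quotLieHom_surjective I)).symm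
lemma mem_ker_quotLieHom (I : LieIdeal R L) (x : L) : x ∈ (quotLieHom I).ker ↔ x ∈ I := by
  rw [LieHom.mem_ker]
  exact LieSubmodule.Quotient.mk_eq_zero I
lemma abelian_of_derived_one_eq_bot (h : derivedSeries R L 1 = ⊥) : IsLieAbelian L := by
  constructor
  intro x y
  have hx : ⁅x, y⁆ ∈ derivedSeries R L 1 := by
    rw [derivedSeries_def, derivedSeriesOfIdeal_succ, derivedSeriesOfIdeal_zero]
    exact LieSubmodule.lie_mem_lie trivial trivial
  rw [h] at hx
  exact hx

lemma derivedSeries_succ' (k : ℕ) :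
    derivedSeries R L (k + 1) = ⁅derivedSeries R L k, derivedSeries R L k⁆ := by
  rw [derivedSeries_def, derivedSeriesOfIdeal_succ]

section Core
variable (A : Type*) [LieRing A] [LieAlgebra ℝ A] (k : ℕ)

local notation "𝔞" => derivedSeries ℝ A (k + 1)

-- quotient: derived series vanishes at k+1
lemma quot_bot : derivedSeries ℝ (A ⧸ 𝔞) (k + 1) = ⊥ := by
  rw [derivedSeries_quot, LieIdeal.map_eq_bot_iff]
  intro x hx
  exact (mem_ker_quotLieHom _ x).mpr hx

-- quotient: derived series nonzero at k
lemma quot_ne_bot (hbot : derivedSeries ℝ A (k + 2) = ⊥)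
    (hne : derivedSeries ℝ A (k + 1) ≠ ⊥) : derivedSeries ℝ (A ⧸ 𝔞) k ≠ ⊥ := by
  intro h0
  rw [derivedSeries_quot, LieIdeal.map_eq_bot_iff] at h0
  have hle' : derivedSeries ℝ A k ≤ 𝔞 := fun x hx => (mem_ker_quotLieHom _ x).mp (h0 hx)
  have hstep : derivedSeries ℝ A (k + 1) ≤ derivedSeries ℝ A (k + 2) := by
    rw [derivedSeries_succ' (k + 1)]
    conv_lhs => rw [derivedSeries_succ' k]
    exact LieSubmodule.mono_lie hle' hle'
  apply hne
  rw [← le_bot_iff, ← hbot]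
  exact hstep

-- the ideal is abelian, its derived series vanishes at any positive index
lemma ideal_bot (hbot : derivedSeries ℝ A (k + 2) = ⊥) (m : ℕ) (hm : 1 ≤ m) :
    derivedSeries ℝ (↥𝔞) m = ⊥ := by
  rw [LieIdeal.derivedSeries_eq_bot_iff]
  have h1 : derivedSeriesOfIdeal ℝ A 1 𝔞 = ⊥ := by
    rw [derivedSeriesOfIdeal_succ, derivedSeriesOfIdeal_zero, ← derivedSeries_succ' (k + 1)]
    exact hbot
  obtain ⟨j, rfl⟩ : ∃ j, m = j + 1 := ⟨m - 1, by omega⟩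
  rw [derivedSeriesOfIdeal_add _ j 1, h1]
  exact derivedSeries_of_bot_eq_bot j (R := ℝ) (L := A)

lemma prod_bot (hbot : derivedSeries ℝ A (k + 2) = ⊥) : derivedSeries ℝ ((A ⧸ 𝔞) × ↥𝔞) (k + 1) = ⊥ :=
  derivedSeries_prod_eq_bot _ (quot_bot A k) (ideal_bot A k hbot (k + 1) (by omega))

lemma prod_ne_bot (hbot : derivedSeries ℝ A (k + 2) = ⊥)
    (hne : derivedSeries ℝ A (k + 1) ≠ ⊥) : derivedSeries ℝ ((A ⧸ 𝔞) × ↥𝔞) k ≠ ⊥ :=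
  derivedSeries_prod_ne_bot _ (quot_ne_bot A k hbot hne)

lemma prod_finrank [FiniteDimensional ℝ A] :
    finrank ℝ ((A ⧸ 𝔞) × ↥𝔞) = finrank ℝ A := by
  rw [Module.finrank_prod]
  exact Submodule.finrank_quotient_add_finrank (LieSubmodule.toSubmodule 𝔞)

end Core
end Stmt6Aux


/-- A bundled real Lie algebra. -/
structure LieAlgBundle where
  carrier : Type
  [lieRing : LieRing carrier]
  [lieAlg : LieAlgebra ℝ carrier]

attribute [instance] LieAlgBundle.lieRing LieAlgBundle.lieAlg

/-- One shear step: a solvable Lie algebra `𝔰` of derived length `r ≥ 2` is replaced by the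
direct sum `(𝔰/𝔰⁽ʳ⁻¹⁾) ⊕ 𝔰⁽ʳ⁻¹⁾`, where `𝔰⁽ʳ⁻¹⁾` is the last nonzero term of the derived
series of `𝔰`. -/
def ShearStep (A B : LieAlgBundle) : Prop :=
  ∃ r : ℕ, 2 ≤ r ∧
    derivedSeries ℝ A.carrier r = ⊥ ∧
    derivedSeries ℝ A.carrier (r - 1) ≠ ⊥ ∧
    Nonempty (B.carrier ≃ₗ⁅ℝ⁆
      (A.carrier ⧸ derivedSeries ℝ A.carrier (r - 1)) × ↥(derivedSeries ℝ A.carrier (r - 1)))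

namespace Stmt6Aux

/-- One formal shear with prescribed index. -/
def shearB (A : LieAlgBundle) (k : ℕ) : LieAlgBundle :=
  ⟨(A.carrier ⧸ derivedSeries ℝ A.carrier (k + 1)) × ↥(derivedSeries ℝ A.carrier (k + 1))⟩

/-- The chain of shears starting from `L`. -/
def chain (L : Type) [LieRing L] [LieAlgebra ℝ L] (r : ℕ) : ℕ → LieAlgBundle
  | 0 => ⟨L⟩
  | (i + 1) => shearB (chain L r i) (r - i - 2)

variable (L : Type) [LieRing L] [LieAlgebra ℝ L] [FiniteDimensional ℝ L]

lemma chain_inv (r : ℕ) (hr : 1 ≤ r)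
    (hsolv : derivedSeries ℝ L r = ⊥) (hlen : derivedSeries ℝ L (r - 1) ≠ ⊥) :
    ∀ i, i ≤ r - 1 →
      FiniteDimensional ℝ (chain L r i).carrier ∧
      derivedSeries ℝ (chain L r i).carrier (r - i) = ⊥ ∧
      derivedSeries ℝ (chain L r i).carrier (r - i - 1) ≠ ⊥ ∧
      Module.finrank ℝ (chain L r i).carrier = Module.finrank ℝ L := by
  intro i
  induction i with
  | zero =>
    intro _
    refine ⟨‹_›, ?_, ?_, rfl⟩
    · exact hsolv
    · exact hlen
  | succ i ih =>
    intro hi1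
    have hi : i ≤ r - 1 := by omega
    obtain ⟨fd, hbot, hne, hfr⟩ := ih hi
    set A := (chain L r i).carrier with hA
    set k := r - i - 2 with hk
    haveI : FiniteDimensional ℝ A := fd
    have e2 : r - i = k + 2 := by omega
    have e1 : r - i - 1 = k + 1 := by omega
    rw [e2] at hbot
    rw [e1] at hne
    have e2' : r - (i + 1) = k + 1 := by omega
    have e1' : r - (i + 1) - 1 = k := by omega
    rw [e1', e2']
    haveI fdq : FiniteDimensional ℝ (A ⧸ derivedSeries ℝ A (k + 1)) :=
      FiniteDimensional.finiteDimensional_quotient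
        (LieSubmodule.toSubmodule (derivedSeries ℝ A (k + 1)))
    haveI fds : FiniteDimensional ℝ ↥(derivedSeries ℝ A (k + 1)) :=
      FiniteDimensional.finiteDimensional_submodule
        (LieSubmodule.toSubmodule (derivedSeries ℝ A (k + 1)))
    exact ⟨Module.Finite.prod,
      prod_bot A k hbot, prod_ne_bot A k hbot hne, (prod_finrank A k).trans hfr⟩

end Stmt6Aux

open Stmt6Aux in
/-- every finite-dimensional real solvable Lie algebra of dimension `n` and
derived length `r` is connected to the Abelian Lie algebra `ℝⁿ` by a finite sequence of
shears: iterating the shear step `r - 1` times yields an Abelian Lie algebra of the same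
dimension `n`. -/
theorem stmt6 (L : Type) [LieRing L] [LieAlgebra ℝ L] [FiniteDimensional ℝ L]
    (n r : ℕ) (hn : finrank ℝ L = n) (hr : 1 ≤ r)
    (hsolv : derivedSeries ℝ L r = ⊥)
    (hlen : derivedSeries ℝ L (r - 1) ≠ ⊥) :
    ∃ chain : ℕ → LieAlgBundle,
      Nonempty ((chain 0).carrier ≃ₗ⁅ℝ⁆ L) ∧
      (∀ i, i < r - 1 → ShearStep (chain i) (chain (i + 1))) ∧
      (∀ i, i ≤ r - 1 → finrank ℝ (chain i).carrier = n) ∧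
      IsLieAbelian (chain (r - 1)).carrier := by
  refine ⟨Stmt6Aux.chain L r, ⟨LieEquiv.refl⟩, ?_, ?_, ?_⟩
  · intro i hi
    obtain ⟨fd, hbot, hne, hfr⟩ := chain_inv L r hr hsolv hlen i (by omega)
    refine ⟨r - i, by omega, hbot, hne, ?_⟩
    rw [show r - i - 1 = r - i - 2 + 1 from by omega]
    exact ⟨LieEquiv.refl⟩
  · intro i hi
    obtain ⟨fd, hbot, hne, hfr⟩ := chain_inv L r hr hsolv hlen i hi
    rw [hfr, hn]
  · obtain ⟨fd, hbot, hne, hfr⟩ := chain_inv L r hr hsolv hlen (r - 1) le_rfl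
    rw [show r - (r - 1) = 1 from by omega] at hbot
    exact abelian_of_derived_one_eq_bot hbot
end

section
/- Let M be a smooth manifold, π : P → M a surjective submersion, (F, ∇) a flat vector bundle over M, ρ : π*F → TP a vector bundle morphism and θ ∈ Ω¹(P, π*F) such that θ ∘ ρ = id_{π*F}, dπ ∘ ρ = 0, and d^∇θ = π*ω for some ω ∈ Ω²(M, F). Then for all sections f₁, f₂ ∈ Γ(π*F), the torsion-free identity [ρf₁, ρf₂] = ρ(∇_{ρf₁} f₂ − ∇_{ρf₂} f₁) holds. -/
/-- let `π : P → M` be a surjective submersion, `(F,∇)` a flat vector bundle over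
`M`, `ρ : π*F → TP` a bundle morphism and `θ ∈ Ω¹(P, π*F)` with `θ∘ρ = id`, `dπ∘ρ = 0` and
`d^∇θ = π*ω` for some `ω ∈ Ω²(M,F)`.  Then the torsion-free identity
`[ρf₁, ρf₂] = ρ(∇_{ρf₁}f₂ - ∇_{ρf₂}f₁)` holds for all sections `f₁, f₂` of `π*F`.

We encode the Lie algebra of vector fields on `P` as `L`, the `ℝ`-module of sections of `π*F`
as `Γ`, the pulled-back flat connection as a bilinear map `D : L →ₗ[ℝ] Γ →ₗ[ℝ] Γ`,
`ρ : Γ →ₗ[ℝ] L` and `θ : L →ₗ[ℝ] Γ`.  The hypothesis `hvert` expresses that brackets of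
vertical vector fields are vertical (`ρ∘θ` is the projection onto `ker dπ = ρ(π*F)`), `hω`
that `π*ω` is horizontal (it vanishes on `ρ(π*F) = ker dπ`, since `dπ∘ρ = 0`), and `hdθ`
is `d^∇θ = π*ω` written out via `d^∇θ(X,Y) = ∇_X(θY) - ∇_Y(θX) - θ[X,Y]`. -/
theorem stmt16 {L Γ : Type*} [LieRing L] [LieAlgebra ℝ L]
    [AddCommGroup Γ] [Module ℝ Γ]
    (D : L →ₗ[ℝ] Γ →ₗ[ℝ] Γ)
    (hflat : ∀ (v w : L) (f : Γ), D v (D w f) - D w (D v f) - D ⁅v, w⁆ f = 0)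
    (ρ : Γ →ₗ[ℝ] L) (θ : L →ₗ[ℝ] Γ)
    (hθρ : ∀ f : Γ, θ (ρ f) = f)
    (hvert : ∀ f₁ f₂ : Γ, ρ (θ ⁅ρ f₁, ρ f₂⁆) = ⁅ρ f₁, ρ f₂⁆)
    (ω : L →ₗ[ℝ] L →ₗ[ℝ] Γ)
    (hω : ∀ (f : Γ) (v : L), ω (ρ f) v = 0)
    (hdθ : ∀ v w : L, D v (θ w) - D w (θ v) - θ ⁅v, w⁆ = ω v w) :
    ∀ f₁ f₂ : Γ, ⁅ρ f₁, ρ f₂⁆ = ρ (D (ρ f₁) f₂ - D (ρ f₂) f₁) := by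
  intro f₁ f₂
  have h := hdθ (ρ f₁) (ρ f₂)
  rw [hθρ, hθρ, hω] at h
  have hθ : θ ⁅ρ f₁, ρ f₂⁆ = D (ρ f₁) f₂ - D (ρ f₂) f₁ := by
    exact (sub_eq_zero.mp h).symm
  rw [← hvert f₁ f₂, hθ]
end
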